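/- Let A, Â, B, B̂ be real matrices with ‖Â − A‖ ≤ ε̄ and ‖B̂ − B‖ ≤ ε̄, suppose ‖Aᵏ‖ ≤ κγᵏ for all k ≥ 0 with κ ≥ 1 and 0 < γ < 1, and suppose ε̄ ≤ (1−γ)/(4κ). Then for all k ≥ 0, ‖Âᵏ − Aᵏ‖ ≤ k·κ²·((3+γ)/4)^{k−1}·ε̄ and ‖ÂᵏB̂ − AᵏB‖ ≤ k·κ²·((3+γ)/4)^{k−1}·ε̄·(‖B‖ + ε̄) + κγᵏε̄. -/

import Mathlib

open Finset in
lemma tele_pow_sub {R : Type*} [Ring R] (a b : R) :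
    ∀ k : ℕ, a ^ k - b ^ k = ∑ i ∈ range k, a ^ i * (a - b) * b ^ (k - 1 - i) := by
  intro k
  induction k with
  | zero => simp
  | succ k ih =>
    rw [Finset.sum_range_succ']
    have h1 : ∀ i, a ^ (i + 1) * (a - b) * b ^ (k + 1 - 1 - (i + 1))
        = a * (a ^ i * (a - b) * b ^ (k - 1 - i)) := by
      intro i
      have hnat : k + 1 - 1 - (i + 1) = k - 1 - i := by omega
      rw [hnat, pow_succ', mul_assoc a, mul_assoc a]
    simp only [h1, ← Finset.mul_sum, ← ih]
    simp only [pow_zero, one_mul, Nat.add_sub_cancel, Nat.sub_zero]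
    rw [mul_sub, sub_mul, ← pow_succ' a, ← pow_succ' b]
    abel

/-- Perturbation bounds for powers `Âᵏ` vs `Aᵏ` and products `ÂᵏB̂` vs `AᵏB` under
estimation error `ε̄` and a geometric power bound on `A`. -/
theorem stmt2 {n m : ℕ}
    (A Ahat : EuclideanSpace ℝ (Fin n) →L[ℝ] EuclideanSpace ℝ (Fin n))
    (B Bhat : EuclideanSpace ℝ (Fin m) →L[ℝ] EuclideanSpace ℝ (Fin n))
    (κ γ ε : ℝ) (hκ : 1 ≤ κ) (hγ0 : 0 < γ) (hγ1 : γ < 1) (hε : 0 < ε)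
    (hεsmall : ε ≤ (1 - γ) / (4 * κ))
    (hA : ‖Ahat - A‖ ≤ ε) (hB : ‖Bhat - B‖ ≤ ε)
    (hpow : ∀ k : ℕ, ‖A ^ k‖ ≤ κ * γ ^ k) :
    ∀ k : ℕ,
      ‖Ahat ^ k - A ^ k‖ ≤ (k : ℝ) * κ ^ 2 * ((3 + γ) / 4) ^ (k - 1) * ε ∧
      ‖(Ahat ^ k).comp Bhat - (A ^ k).comp B‖ ≤
        (k : ℝ) * κ ^ 2 * ((3 + γ) / 4) ^ (k - 1) * ε * (‖B‖ + ε) + κ * γ ^ k * ε := by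
  have hκ0 : (0:ℝ) < κ := lt_of_lt_of_le one_pos hκ
  set ρ : ℝ := (3 + γ) / 4 with hρdef
  set β : ℝ := γ + κ * ε with hβdef
  have hκε : κ * ε ≤ (1 - γ) / 4 := by
    have h := mul_le_mul_of_nonneg_left hεsmall hκ0.le
    have : κ * ((1 - γ) / (4 * κ)) = (1 - γ) / 4 := by field_simp
    linarith [this ▸ h]
  have hβ0 : (0:ℝ) < β := by positivity
  have hρ0 : (0:ℝ) < ρ := by rw [hρdef]; linarith
  have hβρ : β ≤ ρ := by rw [hβdef, hρdef]; linarith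
  have hγρ : γ ≤ ρ := by rw [hρdef]; linarith
  have hβγ : β - γ = κ * ε := by rw [hβdef]; ring
  -- sum bound for the difference of powers
  have hsum : ∀ k : ℕ, ‖Ahat ^ k - A ^ k‖ ≤
      ∑ i ∈ Finset.range k, ‖Ahat ^ i‖ * ε * (κ * γ ^ (k - 1 - i)) := by
    intro k
    rw [tele_pow_sub Ahat A k]
    refine le_trans (norm_sum_le _ _) (Finset.sum_le_sum fun i _ => ?_)
    calc ‖Ahat ^ i * (Ahat - A) * A ^ (k - 1 - i)‖
        ≤ ‖Ahat ^ i * (Ahat - A)‖ * ‖A ^ (k - 1 - i)‖ := norm_mul_le _ _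
      _ ≤ ‖Ahat ^ i‖ * ‖Ahat - A‖ * ‖A ^ (k - 1 - i)‖ :=
          mul_le_mul_of_nonneg_right (norm_mul_le _ _) (norm_nonneg _)
      _ ≤ ‖Ahat ^ i‖ * ε * (κ * γ ^ (k - 1 - i)) := by
          refine mul_le_mul ?_ (hpow _) (norm_nonneg _) (by positivity)
          exact mul_le_mul_of_nonneg_left hA (norm_nonneg _)
  -- bound on powers of Ahat, by strong induction
  have hAhat : ∀ k : ℕ, ‖Ahat ^ k‖ ≤ κ * β ^ k := by
    intro k
    induction k using Nat.strong_induction_on with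
    | _ k ih =>
      have h1 : ‖Ahat ^ k - A ^ k‖ ≤ κ * (β ^ k - γ ^ k) := by
        refine le_trans (hsum k) ?_
        have heq : ∑ i ∈ Finset.range k, (κ * β ^ i) * ε * (κ * γ ^ (k - 1 - i))
            = κ * (β ^ k - γ ^ k) := by
          rw [← geom_sum₂_mul β γ k, Finset.sum_mul, Finset.mul_sum]
          refine Finset.sum_congr rfl fun i _ => ?_
          rw [hβγ]; ring
        rw [← heq]
        refine Finset.sum_le_sum fun i hi => ?_
        have hih := ih i (Finset.mem_range.mp hi)
        have h2 : (0:ℝ) ≤ κ * γ ^ (k - 1 - i) := by positivity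
        exact mul_le_mul_of_nonneg_right
          (mul_le_mul_of_nonneg_right hih hε.le) h2
      calc ‖Ahat ^ k‖ = ‖A ^ k + (Ahat ^ k - A ^ k)‖ := by congr 1; abel
        _ ≤ ‖A ^ k‖ + ‖Ahat ^ k - A ^ k‖ := norm_add_le _ _
        _ ≤ κ * γ ^ k + κ * (β ^ k - γ ^ k) := add_le_add (hpow k) h1
        _ = κ * β ^ k := by ring
  -- final bound on the difference of powers
  have hD : ∀ k : ℕ, ‖Ahat ^ k - A ^ k‖ ≤ (k : ℝ) * κ ^ 2 * ρ ^ (k - 1) * ε := by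
    intro k
    refine le_trans (hsum k) ?_
    have hterm : ∀ i ∈ Finset.range k,
        ‖Ahat ^ i‖ * ε * (κ * γ ^ (k - 1 - i)) ≤ κ ^ 2 * ρ ^ (k - 1) * ε := by
      intro i hi
      have hik : i < k := Finset.mem_range.mp hi
      have h1 : ‖Ahat ^ i‖ ≤ κ * β ^ i := hAhat i
      have h2 : β ^ i ≤ ρ ^ i := pow_le_pow_left₀ hβ0.le hβρ i
      have h3 : γ ^ (k - 1 - i) ≤ ρ ^ (k - 1 - i) := pow_le_pow_left₀ hγ0.le hγρ _
      have h4 : ρ ^ i * ρ ^ (k - 1 - i) = ρ ^ (k - 1) := by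
        rw [← pow_add]; congr 1; omega
      have h5 : (0:ℝ) ≤ γ ^ (k - 1 - i) := by positivity
      have h7 : (0:ℝ) ≤ ρ ^ i := by positivity
      have h8 : β ^ i * γ ^ (k - 1 - i) ≤ ρ ^ (k - 1) :=
        h4 ▸ mul_le_mul h2 h3 h5 h7
      have h2' : (0:ℝ) ≤ κ * γ ^ (k - 1 - i) := by positivity
      calc ‖Ahat ^ i‖ * ε * (κ * γ ^ (k - 1 - i))
          ≤ κ * β ^ i * ε * (κ * γ ^ (k - 1 - i)) :=
            mul_le_mul_of_nonneg_right (mul_le_mul_of_nonneg_right h1 hε.le) h2'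
        _ = κ ^ 2 * ε * (β ^ i * γ ^ (k - 1 - i)) := by ring
        _ ≤ κ ^ 2 * ε * ρ ^ (k - 1) :=
            mul_le_mul_of_nonneg_left h8 (by positivity)
        _ = κ ^ 2 * ρ ^ (k - 1) * ε := by ring
    calc ∑ i ∈ Finset.range k, ‖Ahat ^ i‖ * ε * (κ * γ ^ (k - 1 - i))
        ≤ ∑ _i ∈ Finset.range k, κ ^ 2 * ρ ^ (k - 1) * ε := Finset.sum_le_sum hterm
      _ = (k : ℝ) * κ ^ 2 * ρ ^ (k - 1) * ε := by
          rw [Finset.sum_const, Finset.card_range]; push_cast; ring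
  intro k
  refine ⟨hD k, ?_⟩
  have hsplit : (Ahat ^ k).comp Bhat - (A ^ k).comp B
      = (Ahat ^ k).comp (Bhat - B) + (Ahat ^ k - A ^ k).comp B := by
    rw [ContinuousLinearMap.comp_sub, ContinuousLinearMap.sub_comp]; abel
  have hAk : ‖Ahat ^ k‖ ≤ κ * γ ^ k + (k : ℝ) * κ ^ 2 * ρ ^ (k - 1) * ε := by
    calc ‖Ahat ^ k‖ = ‖A ^ k + (Ahat ^ k - A ^ k)‖ := by congr 1; abel
      _ ≤ ‖A ^ k‖ + ‖Ahat ^ k - A ^ k‖ := norm_add_le _ _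
      _ ≤ κ * γ ^ k + (k : ℝ) * κ ^ 2 * ρ ^ (k - 1) * ε := add_le_add (hpow k) (hD k)
  calc ‖(Ahat ^ k).comp Bhat - (A ^ k).comp B‖
      ≤ ‖(Ahat ^ k).comp (Bhat - B)‖ + ‖(Ahat ^ k - A ^ k).comp B‖ := by
        rw [hsplit]; exact norm_add_le _ _
    _ ≤ ‖Ahat ^ k‖ * ‖Bhat - B‖ + ‖Ahat ^ k - A ^ k‖ * ‖B‖ :=
        add_le_add (ContinuousLinearMap.opNorm_comp_le _ _)
          (ContinuousLinearMap.opNorm_comp_le _ _)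
    _ ≤ (κ * γ ^ k + (k : ℝ) * κ ^ 2 * ρ ^ (k - 1) * ε) * ε
        + ((k : ℝ) * κ ^ 2 * ρ ^ (k - 1) * ε) * ‖B‖ := by
        refine add_le_add ?_ ?_
        · exact mul_le_mul hAk hB (norm_nonneg _) (by positivity)
        · exact mul_le_mul_of_nonneg_right (hD k) (norm_nonneg _)
    _ = (k : ℝ) * κ ^ 2 * ρ ^ (k - 1) * ε * (‖B‖ + ε) + κ * γ ^ k * ε := by ring
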